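/- The even map D_2 on W^q given by D_2(L_n) = 0 and D_2(G_n) = G_n is an α⁰-derivation, and the four maps D_1, D_2, D_3, D_4 (D_1(L_n)=nL_n, D_1(G_n)=nG_n; D_2 as above; D_3(L_n)=nG_{n-1}, D_3(G_n)=0; D_4(L_n)=0, D_4(G_n)=L_{n+1}) are linearly independent over ℂ. -/

import Mathlib

noncomputable section

/-- The `q`-number `{m} = (1-q^m)/(1-q)`. -/
def qn (q : ℂ) (m : ℤ) : ℂ := (1 - q ^ m) / (1 - q)

/-- The `q`-deformed Witt superalgebra `W^q`, with even basis indexed by `Sum.inl n`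
(the `L_n`) and odd basis indexed by `Sum.inr n` (the `G_n`). -/
abbrev Wq : Type := (ℤ ⊕ ℤ) →₀ ℂ

def L (n : ℤ) : Wq := Finsupp.single (Sum.inl n) 1
def G (n : ℤ) : Wq := Finsupp.single (Sum.inr n) 1

/-- Bracket of `W^q` on basis elements:
`[L_n, L_m] = ({m}-{n}) L_{n+m}`, `[L_n, G_m] = ({m+1}-{n}) G_{n+m}`,
`[G_m, L_n] = -[L_n, G_m]`, `[G_n, G_m] = 0`. -/
def brBasis (q : ℂ) : ℤ ⊕ ℤ → ℤ ⊕ ℤ → Wq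
  | Sum.inl n, Sum.inl m => (qn q m - qn q n) • L (n + m)
  | Sum.inl n, Sum.inr m => (qn q (m + 1) - qn q n) • G (n + m)
  | Sum.inr m, Sum.inl n => -((qn q (m + 1) - qn q n) • G (n + m))
  | Sum.inr _, Sum.inr _ => 0

/-- The bilinear extension of the bracket to `W^q`. -/
def br (q : ℂ) (x y : Wq) : Wq :=
  x.sum fun a ca => y.sum fun b cb => (ca * cb) • brBasis q a b

/-- The twist map `α(L_n) = (1+q^n) L_n`, `α(G_n) = (1+q^{n+1}) G_n`. -/
def alphaW (q : ℂ) (x : Wq) : Wq :=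
  x.sum fun a ca =>
    match a with
    | Sum.inl n => (ca * (1 + q ^ n)) • L n
    | Sum.inr n => (ca * (1 + q ^ (n + 1))) • G n

/-- `par false x`: `x` is even (supported on the `L_n`);
`par true x`: `x` is odd (supported on the `G_n`). -/
def par (i : Bool) (x : Wq) : Prop :=
  if i then ∀ n, x (Sum.inl n) = 0 else ∀ n, x (Sum.inr n) = 0

/-- The sign `(-1)^{ij}` for parities `i, j`. -/
def sB (i j : Bool) : ℂ := if i && j then -1 else 1

end

noncomputable def D1 (x : Wq) : Wq :=
  x.sum fun a c =>
    match a with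
    | Sum.inl n => (c * (n : ℂ)) • L n
    | Sum.inr n => (c * (n : ℂ)) • G n

noncomputable def D2 (x : Wq) : Wq :=
  x.sum fun a c =>
    match a with
    | Sum.inl _ => 0
    | Sum.inr n => c • G n

noncomputable def D3 (x : Wq) : Wq :=
  x.sum fun a c =>
    match a with
    | Sum.inl n => (c * (n : ℂ)) • G (n - 1)
    | Sum.inr _ => 0

noncomputable def D4 (x : Wq) : Wq :=
  x.sum fun a c =>
    match a with
    | Sum.inl _ => 0
    | Sum.inr n => c • L (n + 1)

section Aux

lemma D2_single (a : ℤ ⊕ ℤ) (c : ℂ) :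
    D2 (Finsupp.single a c) =
      (match a with
       | Sum.inl _ => (0 : Wq)
       | Sum.inr n => c • G n) := by
  unfold D2
  rw [Finsupp.sum_single_index]
  cases a <;> simp

lemma D2_zero : D2 0 = 0 := by
  unfold D2; rw [Finsupp.sum_zero_index]

lemma D2_add (x y : Wq) : D2 (x + y) = D2 x + D2 y := by
  unfold D2
  rw [Finsupp.sum_add_index']
  · intro a; cases a <;> simp
  · intro a b₁ b₂; cases a <;> simp [add_smul]

lemma D2_smul (t : ℂ) (x : Wq) : D2 (t • x) = t • D2 x := by
  unfold D2
  rw [Finsupp.sum_smul_index', Finsupp.smul_sum]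
  · apply Finsupp.sum_congr
    intro a _; cases a <;> simp [mul_smul]
  · intro a; cases a <;> simp

lemma br_zero_left (q : ℂ) (y : Wq) : br q 0 y = 0 := by
  unfold br; rw [Finsupp.sum_zero_index]

lemma br_zero_right (q : ℂ) (x : Wq) : br q x 0 = 0 := by
  unfold br
  simp [Finsupp.sum_zero_index]

lemma br_add_left (q : ℂ) (x x' y : Wq) :
    br q (x + x') y = br q x y + br q x' y := by
  unfold br
  rw [Finsupp.sum_add_index']
  · intro a; simp
  · intro a b₁ b₂
    rw [← Finsupp.sum_add]
    apply Finsupp.sum_congr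
    intro b _; simp [add_mul, add_smul]

lemma br_add_right (q : ℂ) (x y y' : Wq) :
    br q x (y + y') = br q x y + br q x y' := by
  unfold br
  rw [← Finsupp.sum_add]
  apply Finsupp.sum_congr
  intro a _
  rw [Finsupp.sum_add_index']
  · intro b; simp
  · intro b b₁ b₂; simp [mul_add, add_smul]

lemma br_single_single (q : ℂ) (a b : ℤ ⊕ ℤ) (c d : ℂ) :
    br q (Finsupp.single a c) (Finsupp.single b d) = (c * d) • brBasis q a b := by
  unfold br
  rw [Finsupp.sum_single_index, Finsupp.sum_single_index]
  · simp
  · rw [Finsupp.sum_single_index] <;> simp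

lemma smul_G (d : ℂ) (m : ℤ) : d • G m = Finsupp.single (Sum.inr m) d := by
  simp [G, Finsupp.smul_single']

lemma D2_neg (x : Wq) : D2 (-x) = -D2 x := by
  rw [← neg_one_smul ℂ x, D2_smul, neg_one_smul]

lemma D2_L (n : ℤ) : D2 (L n) = 0 := D2_single (Sum.inl n) 1

lemma D2_G (n : ℤ) : D2 (G n) = G n := by
  simpa [G] using D2_single (Sum.inr n) 1

lemma D2_der (q : ℂ) (x y : Wq) :
    D2 (br q x y) = br q (D2 x) y + br q x (D2 y) := by
  induction x using Finsupp.induction_linear generalizing y with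
  | zero => simp [br_zero_left, D2_zero]
  | add x x' hx hx' =>
      simp [br_add_left, D2_add, hx, hx']; abel
  | single a c =>
    induction y using Finsupp.induction_linear with
    | zero => simp [br_zero_right, D2_zero]
    | add y y' hy hy' =>
        simp [br_add_right, D2_add, hy, hy']; abel
    | single b d =>
      rw [br_single_single, D2_smul, D2_single, D2_single]
      cases a with
      | inl n =>
        cases b with
        | inl m =>
          simp only [brBasis, D2_smul, D2_L, smul_zero, br_zero_left, br_zero_right, add_zero]
        | inr m =>
          simp only [brBasis, D2_smul, D2_G, br_zero_left, zero_add]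
          simp only [smul_G]
          rw [br_single_single]
          simp [brBasis, G, Finsupp.smul_single']
      | inr m =>
        cases b with
        | inl n =>
          simp only [brBasis, D2_neg, D2_smul, D2_G, br_zero_right, add_zero]
          simp only [smul_G]
          rw [br_single_single]
          simp [brBasis, G, Finsupp.smul_single']
        | inr m' =>
          simp only [brBasis, smul_zero, D2_zero]
          simp only [smul_G]
          simp [br_single_single, brBasis]

lemma D1_L (n : ℤ) : D1 (L n) = (n : ℂ) • L n := by
  unfold D1 L
  rw [Finsupp.sum_single_index] <;> simp

lemma D1_G (n : ℤ) : D1 (G n) = (n : ℂ) • G n := by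
  unfold D1 G
  rw [Finsupp.sum_single_index] <;> simp

lemma D3_L (n : ℤ) : D3 (L n) = (n : ℂ) • G (n - 1) := by
  unfold D3 L
  rw [Finsupp.sum_single_index] <;> simp

lemma D3_G (n : ℤ) : D3 (G n) = 0 := by
  unfold D3 G
  rw [Finsupp.sum_single_index] <;> simp

lemma D4_L (n : ℤ) : D4 (L n) = 0 := by
  unfold D4 L
  rw [Finsupp.sum_single_index] <;> simp

lemma D4_G (n : ℤ) : D4 (G n) = L (n + 1) := by
  unfold D4 G
  rw [Finsupp.sum_single_index] <;> simp

end Aux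

/-- `D_2` is an even `α⁰`-derivation of `W^q`, and `D_1, D_2, D_3, D_4` are
linearly independent over `ℂ`. -/
theorem stmt11 (q : ℂ) (hq0 : q ≠ 0) (hq1 : q ≠ 1)
    (hroot : ∀ k : ℤ, k ≠ 0 → q ^ k ≠ 1) :
    (∀ x y : Wq, D2 (br q x y) = br q (D2 x) y + br q x (D2 y)) ∧
    LinearIndependent ℂ (![D1, D2, D3, D4] : Fin 4 → (Wq → Wq)) := by
  refine ⟨D2_der q, ?_⟩
  rw [Fintype.linearIndependent_iff]
  intro g hg
  have hL := congrFun hg (L 1)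
  have hG := congrFun hg (G 1)
  simp only [Fin.sum_univ_four, Matrix.cons_val_zero, Matrix.cons_val_one, Matrix.head_cons,
    Matrix.cons_val_two, Matrix.tail_cons, Matrix.cons_val_three, Pi.add_apply, Pi.smul_apply,
    Pi.zero_apply, D1_L, D2_L, D3_L, D4_L, D1_G, D2_G, D3_G, D4_G, smul_zero, add_zero,
    zero_add] at hL hG
  have hL1 := DFunLike.congr_fun hL (Sum.inl 1)
  have hL2 := DFunLike.congr_fun hL (Sum.inr 0)
  have hG1 := DFunLike.congr_fun hG (Sum.inr 1)
  have hG2 := DFunLike.congr_fun hG (Sum.inl 2)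
  simp [L, G, Finsupp.single_apply] at hL1 hL2 hG1 hG2
  have h0 : g 0 = 0 := by simpa using hL1
  have h2 : g 2 = 0 := hL2
  have h3 : g 3 = 0 := hG2
  have h1 : g 1 = 0 := by
    have := hG1; rw [h0] at this; simpa using this
  intro i
  fin_cases i <;> assumption
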